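/- Let Ω ⊆ ℝ³ be open, let ρ, η, φ : Ω → ℝ be smooth with ρ > 0 and sin η ≠ 0 on Ω, and define s = (sin η cos φ, sin η sin φ, cos η), s_η = (cos η cos φ, cos η sin φ, −sin η), s_φ = (−sin φ, cos φ, 0). Then the pointwise identity (1/ρ)·Σᵢ ∂ᵢ(ρ·∂ᵢs) = [(1/ρ)·∇·(ρ∇η) − sin η·cos η·|∇φ|²]·s_η + [(1/(ρ·sin η))·∇·(ρ·sin²η·∇φ)]·s_φ − (|∇η|² + sin²η·|∇φ|²)·s holds on Ω. -/

import Mathlib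

open Real

noncomputable section

/-- Partial derivative of a scalar function on ℝ³ in the `i`-th coordinate direction. -/
noncomputable def pd (i : Fin 3) (f : (Fin 3 → ℝ) → ℝ) (x : Fin 3 → ℝ) : ℝ :=
  fderiv ℝ f x (Pi.single i 1)

/-- Divergence of a vector field on ℝ³. -/
noncomputable def div3 (v : (Fin 3 → ℝ) → (Fin 3 → ℝ)) (x : Fin 3 → ℝ) : ℝ :=
  ∑ i, pd i (fun y => v y i) x

section Helpers

variable {f g : (Fin 3 → ℝ) → ℝ} {x : Fin 3 → ℝ} {i : Fin 3}

lemma pd_mul (hf : DifferentiableAt ℝ f x) (hg : DifferentiableAt ℝ g x) :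
    pd i (fun y => f y * g y) x = pd i f x * g x + f x * pd i g x := by
  unfold pd
  rw [fderiv_fun_mul hf hg]
  simp [mul_comm]
  ring

lemma pd_sub (hf : DifferentiableAt ℝ f x) (hg : DifferentiableAt ℝ g x) :
    pd i (fun y => f y - g y) x = pd i f x - pd i g x := by
  unfold pd
  rw [fderiv_fun_sub hf hg]
  simp

lemma pd_add (hf : DifferentiableAt ℝ f x) (hg : DifferentiableAt ℝ g x) :
    pd i (fun y => f y + g y) x = pd i f x + pd i g x := by
  unfold pd
  rw [fderiv_fun_add hf hg]
  simp

lemma pd_sin (hf : DifferentiableAt ℝ f x) :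
    pd i (fun y => Real.sin (f y)) x = Real.cos (f x) * pd i f x := by
  unfold pd
  rw [fderiv_sin hf]
  simp

lemma pd_cos (hf : DifferentiableAt ℝ f x) :
    pd i (fun y => Real.cos (f y)) x = -Real.sin (f x) * pd i f x := by
  unfold pd
  rw [fderiv_cos hf]
  simp

lemma pd_neg :
    pd i (fun y => -(f y)) x = -(pd i f x) := by
  unfold pd
  rw [fderiv_fun_neg]
  simp

lemma pd_sin_sq (hf : DifferentiableAt ℝ f x) :
    pd i (fun y => Real.sin (f y) ^ 2) x
      = 2 * Real.sin (f x) * Real.cos (f x) * pd i f x := by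
  have h : (fun y => Real.sin (f y) ^ 2) = fun y => Real.sin (f y) * Real.sin (f y) := by
    funext y; ring
  rw [h, pd_mul hf.sin hf.sin, pd_sin hf]
  ring

lemma pd_congr {Ω : Set (Fin 3 → ℝ)} (hΩ : IsOpen Ω) (hx : x ∈ Ω)
    (h : ∀ y ∈ Ω, f y = g y) : pd i f x = pd i g x := by
  unfold pd
  rw [Filter.EventuallyEq.fderiv_eq (by filter_upwards [hΩ.mem_nhds hx] using h)]

lemma contDiffOn_pd {Ω : Set (Fin 3 → ℝ)} (hΩ : IsOpen Ω)
    (hf : ContDiffOn ℝ (⊤ : ℕ∞) f Ω) (i : Fin 3) :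
    ContDiffOn ℝ (⊤ : ℕ∞) (fun y => pd i f y) Ω := by
  have h1 := hf.fderiv_of_isOpen (m := (⊤ : ℕ∞)) hΩ (by simp)
  exact h1.clm_apply contDiffOn_const

variable {ρ η φ d1 d2 : (Fin 3 → ℝ) → ℝ}

lemma pdX0 (hρx : DifferentiableAt ℝ ρ x) (hηx : DifferentiableAt ℝ η x)
    (hφx : DifferentiableAt ℝ φ x) (hd1 : DifferentiableAt ℝ d1 x)
    (hd2 : DifferentiableAt ℝ d2 x) :
    pd i (fun y => ρ y * (Real.cos (η y) * Real.cos (φ y) * d1 y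
        - Real.sin (η y) * Real.sin (φ y) * d2 y)) x
      = pd i ρ x * (Real.cos (η x) * Real.cos (φ x) * d1 x
          - Real.sin (η x) * Real.sin (φ x) * d2 x)
        + ρ x * (Real.cos (η x) * Real.cos (φ x) * pd i d1 x
          - Real.sin (η x) * Real.sin (φ x) * pd i d2 x
          - Real.sin (η x) * Real.cos (φ x) * pd i η x * d1 x
          - Real.cos (η x) * Real.sin (φ x) * pd i φ x * d1 x
          - Real.cos (η x) * Real.sin (φ x) * pd i η x * d2 x
          - Real.sin (η x) * Real.cos (φ x) * pd i φ x * d2 x) := by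
  rw [pd_mul hρx (((hηx.cos.fun_mul hφx.cos).fun_mul hd1).fun_sub ((hηx.sin.fun_mul hφx.sin).fun_mul hd2)),
      pd_sub ((hηx.cos.fun_mul hφx.cos).fun_mul hd1) ((hηx.sin.fun_mul hφx.sin).fun_mul hd2),
      pd_mul (hηx.cos.fun_mul hφx.cos) hd1, pd_mul (hηx.sin.fun_mul hφx.sin) hd2,
      pd_mul hηx.cos hφx.cos, pd_mul hηx.sin hφx.sin,
      pd_cos hηx, pd_cos hφx, pd_sin hηx, pd_sin hφx]
  ring

lemma pdX1 (hρx : DifferentiableAt ℝ ρ x) (hηx : DifferentiableAt ℝ η x)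
    (hφx : DifferentiableAt ℝ φ x) (hd1 : DifferentiableAt ℝ d1 x)
    (hd2 : DifferentiableAt ℝ d2 x) :
    pd i (fun y => ρ y * (Real.cos (η y) * Real.sin (φ y) * d1 y
        + Real.sin (η y) * Real.cos (φ y) * d2 y)) x
      = pd i ρ x * (Real.cos (η x) * Real.sin (φ x) * d1 x
          + Real.sin (η x) * Real.cos (φ x) * d2 x)
        + ρ x * (Real.cos (η x) * Real.sin (φ x) * pd i d1 x
          + Real.sin (η x) * Real.cos (φ x) * pd i d2 x
          - Real.sin (η x) * Real.sin (φ x) * pd i η x * d1 x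
          + Real.cos (η x) * Real.cos (φ x) * pd i φ x * d1 x
          + Real.cos (η x) * Real.cos (φ x) * pd i η x * d2 x
          - Real.sin (η x) * Real.sin (φ x) * pd i φ x * d2 x) := by
  rw [pd_mul hρx (((hηx.cos.fun_mul hφx.sin).fun_mul hd1).fun_add ((hηx.sin.fun_mul hφx.cos).fun_mul hd2)),
      pd_add ((hηx.cos.fun_mul hφx.sin).fun_mul hd1) ((hηx.sin.fun_mul hφx.cos).fun_mul hd2),
      pd_mul (hηx.cos.fun_mul hφx.sin) hd1, pd_mul (hηx.sin.fun_mul hφx.cos) hd2,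
      pd_mul hηx.cos hφx.sin, pd_mul hηx.sin hφx.cos,
      pd_cos hηx, pd_cos hφx, pd_sin hηx, pd_sin hφx]
  ring

lemma pdX2 (hρx : DifferentiableAt ℝ ρ x) (hηx : DifferentiableAt ℝ η x)
    (hd1 : DifferentiableAt ℝ d1 x) :
    pd i (fun y => ρ y * (-Real.sin (η y) * d1 y)) x
      = pd i ρ x * (-Real.sin (η x) * d1 x)
        + ρ x * (-Real.cos (η x) * pd i η x * d1 x - Real.sin (η x) * pd i d1 x) := by
  have hneg : DifferentiableAt ℝ (fun y => -Real.sin (η y)) x := hηx.sin.neg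
  rw [pd_mul hρx (hneg.fun_mul hd1), pd_mul hneg hd1,
      show (fun y => -Real.sin (η y)) = (fun y => -(Real.sin (η y))) from rfl,
      pd_neg, pd_sin hηx]
  ring

end Helpers

/-- **Frame decomposition of the density-weighted Laplacian of the spin field.**
With `s = (sin η cos φ, sin η sin φ, cos η)` and the frame vectors `s_η`, `s_φ`:
`(1/ρ) Σᵢ ∂ᵢ(ρ ∂ᵢs) = [(1/ρ)∇·(ρ∇η) - sin η cos η |∇φ|²] s_η
+ [(1/(ρ sin η)) ∇·(ρ sin²η ∇φ)] s_φ - (|∇η|² + sin²η |∇φ|²) s`. -/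
theorem weighted_laplacian_frame_decomposition
    (Ω : Set (Fin 3 → ℝ)) (hΩ : IsOpen Ω)
    (ρ η φ : (Fin 3 → ℝ) → ℝ)
    (hρ : ContDiffOn ℝ (⊤ : ℕ∞) ρ Ω) (hρpos : ∀ x ∈ Ω, 0 < ρ x)
    (hη : ContDiffOn ℝ (⊤ : ℕ∞) η Ω) (hφ : ContDiffOn ℝ (⊤ : ℕ∞) φ Ω)
    (hsin : ∀ x ∈ Ω, Real.sin (η x) ≠ 0)
    (s sη sφ : (Fin 3 → ℝ) → Fin 3 → ℝ)
    (hs : s = fun y =>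
      ![Real.sin (η y) * Real.cos (φ y), Real.sin (η y) * Real.sin (φ y), Real.cos (η y)])
    (hsη : sη = fun y =>
      ![Real.cos (η y) * Real.cos (φ y), Real.cos (η y) * Real.sin (φ y), -Real.sin (η y)])
    (hsφ : sφ = fun y => ![-Real.sin (φ y), Real.cos (φ y), 0]) :
    ∀ x ∈ Ω, ∀ k,
      (1 / ρ x) * (∑ i, pd i (fun y => ρ y * pd i (fun z => s z k) y) x)
        = ((1 / ρ x) * div3 (fun y l => ρ y * pd l η y) x
            - Real.sin (η x) * Real.cos (η x) * ∑ i, (pd i φ x) ^ 2) * sη x k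
          + (1 / (ρ x * Real.sin (η x)))
              * div3 (fun y l => ρ y * Real.sin (η y) ^ 2 * pd l φ y) x * sφ x k
          - ((∑ i, (pd i η x) ^ 2)
              + Real.sin (η x) ^ 2 * ∑ i, (pd i φ x) ^ 2) * s x k := by
  intro x hx k
  have hρx : DifferentiableAt ℝ ρ x :=
    (hρ.contDiffAt (hΩ.mem_nhds hx)).differentiableAt (by simp)
  have hηx : DifferentiableAt ℝ η x :=
    (hη.contDiffAt (hΩ.mem_nhds hx)).differentiableAt (by simp)
  have hφx : DifferentiableAt ℝ φ x :=
    (hφ.contDiffAt (hΩ.mem_nhds hx)).differentiableAt (by simp)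
  have hdη : ∀ i, DifferentiableAt ℝ (fun y => pd i η y) x := fun i =>
    ((contDiffOn_pd hΩ hη i).contDiffAt (hΩ.mem_nhds hx)).differentiableAt (by simp)
  have hdφ : ∀ i, DifferentiableAt ℝ (fun y => pd i φ y) x := fun i =>
    ((contDiffOn_pd hΩ hφ i).contDiffAt (hΩ.mem_nhds hx)).differentiableAt (by simp)
  have hρne : ρ x ≠ 0 := (hρpos x hx).ne'
  have hsne : Real.sin (η x) ≠ 0 := hsin x hx
  have hpy : Real.sin (η x) ^ 2 + Real.cos (η x) ^ 2 = 1 := Real.sin_sq_add_cos_sq (η x)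
  -- divergence terms
  have hdivη : div3 (fun y l => ρ y * pd l η y) x
      = ∑ l, (pd l ρ x * pd l η x + ρ x * pd l (fun y => pd l η y) x) := by
    unfold div3
    exact Finset.sum_congr rfl fun l _ => pd_mul hρx (hdη l)
  have hdivφ : div3 (fun y l => ρ y * Real.sin (η y) ^ 2 * pd l φ y) x
      = ∑ l, ((pd l ρ x * Real.sin (η x) ^ 2
            + ρ x * (2 * Real.sin (η x) * Real.cos (η x) * pd l η x)) * pd l φ x
          + ρ x * Real.sin (η x) ^ 2 * pd l (fun y => pd l φ y) x) := by
    unfold div3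
    refine Finset.sum_congr rfl fun l _ => ?_
    have h1 : DifferentiableAt ℝ (fun y => ρ y * Real.sin (η y) ^ 2) x :=
      hρx.mul (hηx.sin.pow 2)
    show pd l (fun y => ρ y * Real.sin (η y) ^ 2 * pd l φ y) x = _
    rw [pd_mul h1 (hdφ l), pd_mul hρx (hηx.sin.fun_pow 2), pd_sin_sq hηx]
  have hdiffy : ∀ y ∈ Ω, DifferentiableAt ℝ η y ∧ DifferentiableAt ℝ φ y := fun y hy =>
    ⟨(hη.contDiffAt (hΩ.mem_nhds hy)).differentiableAt (by simp),
     (hφ.contDiffAt (hΩ.mem_nhds hy)).differentiableAt (by simp)⟩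
  fin_cases k
  · -- k = 0
    have key : ∀ i : Fin 3, pd i (fun y => ρ y * pd i (fun z => s z 0) y) x
        = pd i ρ x * (Real.cos (η x) * Real.cos (φ x) * pd i η x
            - Real.sin (η x) * Real.sin (φ x) * pd i φ x)
          + ρ x * (Real.cos (η x) * Real.cos (φ x) * pd i (fun y => pd i η y) x
            - Real.sin (η x) * Real.sin (φ x) * pd i (fun y => pd i φ y) x
            - Real.sin (η x) * Real.cos (φ x) * pd i η x * pd i η x
            - Real.cos (η x) * Real.sin (φ x) * pd i φ x * pd i η x
            - Real.cos (η x) * Real.sin (φ x) * pd i η x * pd i φ x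
            - Real.sin (η x) * Real.cos (φ x) * pd i φ x * pd i φ x) := by
      intro i
      have e1 : ∀ y ∈ Ω, ρ y * pd i (fun z => s z 0) y
          = ρ y * (Real.cos (η y) * Real.cos (φ y) * pd i η y
              - Real.sin (η y) * Real.sin (φ y) * pd i φ y) := by
        intro y hy
        obtain ⟨hηy, hφy⟩ := hdiffy y hy
        have hf : (fun z => s z 0) = fun z => Real.sin (η z) * Real.cos (φ z) := by
          funext z; rw [hs]; simp
        rw [hf, pd_mul hηy.sin hφy.cos, pd_sin hηy, pd_cos hφy]
        ring
      rw [pd_congr hΩ hx e1, pdX0 hρx hηx hφx (hdη i) (hdφ i)]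
    simp only [Fin.zero_eta]
    rw [hdivη, hdivφ]
    simp only [Fin.sum_univ_three]
    rw [key 0, key 1, key 2]
    simp only [hs, hsη, hsφ, Matrix.cons_val_zero]
    field_simp
    linear_combination (Real.cos (φ x) * Real.sin (η x) * ρ x *
      (pd 0 φ x ^ 2 + pd 1 φ x ^ 2 + pd 2 φ x ^ 2)) * hpy
  · -- k = 1
    have key : ∀ i : Fin 3, pd i (fun y => ρ y * pd i (fun z => s z 1) y) x
        = pd i ρ x * (Real.cos (η x) * Real.sin (φ x) * pd i η x
            + Real.sin (η x) * Real.cos (φ x) * pd i φ x)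
          + ρ x * (Real.cos (η x) * Real.sin (φ x) * pd i (fun y => pd i η y) x
            + Real.sin (η x) * Real.cos (φ x) * pd i (fun y => pd i φ y) x
            - Real.sin (η x) * Real.sin (φ x) * pd i η x * pd i η x
            + Real.cos (η x) * Real.cos (φ x) * pd i φ x * pd i η x
            + Real.cos (η x) * Real.cos (φ x) * pd i η x * pd i φ x
            - Real.sin (η x) * Real.sin (φ x) * pd i φ x * pd i φ x) := by
      intro i
      have e1 : ∀ y ∈ Ω, ρ y * pd i (fun z => s z 1) y
          = ρ y * (Real.cos (η y) * Real.sin (φ y) * pd i η y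
              + Real.sin (η y) * Real.cos (φ y) * pd i φ y) := by
        intro y hy
        obtain ⟨hηy, hφy⟩ := hdiffy y hy
        have hf : (fun z => s z 1) = fun z => Real.sin (η z) * Real.sin (φ z) := by
          funext z; rw [hs]; simp
        rw [hf, pd_mul hηy.sin hφy.sin, pd_sin hηy, pd_sin hφy]
        ring
      rw [pd_congr hΩ hx e1, pdX1 hρx hηx hφx (hdη i) (hdφ i)]
    simp only [Fin.mk_one]
    rw [hdivη, hdivφ]
    simp only [Fin.sum_univ_three]
    rw [key 0, key 1, key 2]
    simp only [hs, hsη, hsφ, Matrix.cons_val_one, Matrix.head_cons, Matrix.cons_val_zero]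
    field_simp
    linear_combination (Real.sin (φ x) * Real.sin (η x) * ρ x *
      (pd 0 φ x ^ 2 + pd 1 φ x ^ 2 + pd 2 φ x ^ 2)) * hpy
  · -- k = 2
    have key : ∀ i : Fin 3, pd i (fun y => ρ y * pd i (fun z => s z 2) y) x
        = pd i ρ x * (-Real.sin (η x) * pd i η x)
          + ρ x * (-Real.cos (η x) * pd i η x * pd i η x
            - Real.sin (η x) * pd i (fun y => pd i η y) x) := by
      intro i
      have e1 : ∀ y ∈ Ω, ρ y * pd i (fun z => s z 2) y
          = ρ y * (-Real.sin (η y) * pd i η y) := by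
        intro y hy
        obtain ⟨hηy, hφy⟩ := hdiffy y hy
        have hf : (fun z => s z 2) = fun z => Real.cos (η z) := by
          funext z; rw [hs]; simp
        rw [hf, pd_cos hηy]
      rw [pd_congr hΩ hx e1, pdX2 hρx hηx (hdη i)]
    simp only [Fin.reduceFinMk]
    rw [hdivη, hdivφ]
    simp only [Fin.sum_univ_three]
    rw [key 0, key 1, key 2]
    simp only [hs, hsη, hsφ, Matrix.cons_val_two, Matrix.tail_cons, Matrix.head_cons]
    field_simp
    ring

end
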